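/- Let f be an odd positive integer, t a positive divisor of f with f − t = 2t(2m+1) for a nonnegative integer m, and set n = (f−1)/2. Then for each ε ∈ {1, −1}, gcd(2^(f−t) − 1, 2^f + ε·2^(n+1) + 1) = 1. -/

import Mathlib

theorem gcd_sub_one_case_2t (n f t m : ℕ) (hn : 1 ≤ n) (hf : f = 2 * n + 1)
    (htpos : 0 < t) (hdvd : t ∣ f) (hm : f - t = 2 * t * (2 * m + 1))
    (ε : ℤ) (hε : ε = 1 ∨ ε = -1) :
    Int.gcd (2 ^ (f - t) - 1) (2 ^ f + ε * 2 ^ (n + 1) + 1) = 1 := by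
  set g := Int.gcd (2 ^ (f - t) - 1) (2 ^ f + ε * 2 ^ (n + 1) + 1) with hg
  have hftpos : 0 < f - t := by rw [hm]; positivity
  have h1 : (g : ℤ) ∣ 2 ^ (f - t) - 1 := Int.gcd_dvd_left _ _
  have h2 : (g : ℤ) ∣ 2 ^ f + ε * 2 ^ (n + 1) + 1 := Int.gcd_dvd_right _ _
  -- g divides 2^(2f)+1
  have key : (2 ^ f + ε * 2 ^ (n + 1) + 1) * (2 ^ f - ε * 2 ^ (n + 1) + 1) = (2:ℤ) ^ (2 * f) + 1 := by
    subst hf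
    rcases hε with h | h <;> subst h <;> ring
  have hg2f : (g : ℤ) ∣ 2 ^ (2 * f) + 1 := key ▸ h2.mul_right _
  -- g is odd
  have hgodd : ¬ (2 ∣ g) := by
    intro h
    have : (2 : ℤ) ∣ 2 ^ (f - t) - 1 := dvd_trans (by exact_mod_cast Int.natCast_dvd_natCast.mpr h) h1
    have h2p : (2 : ℤ) ∣ 2 ^ (f - t) := dvd_pow_self 2 hftpos.ne'
    have : (2 : ℤ) ∣ 1 := by
      have := dvd_sub h2p this
      simpa using this
    norm_num at this
  have hgne : g ≠ 0 := by
    intro h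
    have h0 := (Int.gcd_eq_zero_iff.mp (hg ▸ h)).1
    have : (1:ℤ) < 2 ^ (f - t) := one_lt_pow₀ (by norm_num) hftpos.ne'
    linarith
  -- number-theoretic fact: gcd (f-t) (4*f) divides 2*f
  have htodd : ¬ 2 ∣ t := by
    intro h
    have : 2 ∣ f := h.trans hdvd
    omega
  have hd : Nat.gcd (f - t) (4 * f) ∣ 2 * f := by
    have hu : f - t = 2 * (t * (2 * m + 1)) := by rw [hm]; ring
    set u := t * (2 * m + 1) with hudef
    have huodd : ¬ 2 ∣ u := by
      intro h
      rcases (Nat.prime_two.dvd_mul.mp h) with h | h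
      · exact htodd h
      · omega
    have : Nat.gcd (f - t) (4 * f) = 2 * Nat.gcd u (2 * f) := by
      rw [hu, show 4 * f = 2 * (2 * f) by ring, Nat.gcd_mul_left]
    rw [this]
    apply Nat.mul_dvd_mul_left
    have hcop : Nat.Coprime (Nat.gcd u (2 * f)) 2 := by
      rcases Nat.coprime_or_dvd_of_prime Nat.prime_two (Nat.gcd u (2 * f)) with h | h
      · exact h.symm
      · exact absurd (h.trans (Nat.gcd_dvd_left u (2 * f))) huodd
    exact (Nat.Coprime.dvd_of_dvd_mul_left hcop (Nat.gcd_dvd_right u (2 * f)))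
  haveI : NeZero g := ⟨hgne⟩
  -- pass to ZMod g
  have e1 : (2 : ZMod g) ^ (f - t) = 1 := by
    have h := (ZMod.intCast_zmod_eq_zero_iff_dvd _ g).mpr h1
    push_cast at h
    linear_combination h
  have e3 : (2 : ZMod g) ^ (2 * f) = -1 := by
    have h := (ZMod.intCast_zmod_eq_zero_iff_dvd _ g).mpr hg2f
    push_cast at h
    linear_combination h
  have e2 : (2 : ZMod g) ^ (4 * f) = 1 := by
    have : (2 : ZMod g) ^ (4 * f) = ((2 : ZMod g) ^ (2 * f)) ^ 2 := by
      rw [← pow_mul]; ring_nf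
    rw [this, e3]; ring
  have hord : orderOf (2 : ZMod g) ∣ 2 * f :=
    (Nat.dvd_gcd (orderOf_dvd_of_pow_eq_one e1) (orderOf_dvd_of_pow_eq_one e2)).trans hd
  have e4 : (2 : ZMod g) ^ (2 * f) = 1 := orderOf_dvd_iff_pow_eq_one.mp hord
  have h11 : (2 : ZMod g) = 0 := by
    have := e4.symm.trans e3
    linear_combination this
  have hg2 : g ∣ 2 := by
    have : ((2 : ℕ) : ZMod g) = 0 := by exact_mod_cast h11
    exact (ZMod.natCast_eq_zero_iff _ _).mp this
  rcases (Nat.dvd_prime Nat.prime_two).mp hg2 with h | h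
  · exact h
  · exact absurd (h ▸ dvd_refl g) hgodd
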